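/- Let n ≥ 1, N ≥ 2 and 1 ≤ d ≤ 2N−2. Let p_1,…,p_N ∈ ℂ^{n+1} be nonzero, pairwise non-proportional vectors all contained in a common 2-dimensional linear subspace of ℂ^{n+1} (so the corresponding N distinct points of ℙ^n are collinear). Then the linear subspace W = {f ∈ V_{d,n} : f is singular at each p_j} has codimension at most N(n−1)+d+1 in V_{d,n}; in particular its codimension is at most N(n+1)−1. -/

import Mathlib

open MvPolynomial
/-- `V_{d,n}`: the space of homogeneous polynomials of degree `d` in `x_0, …, x_n`. -/
noncomputable def Vdn (n d : ℕ) : Submodule ℂ (MvPolynomial (Fin (n+1)) ℂ) :=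
  MvPolynomial.homogeneousSubmodule (Fin (n+1)) ℂ d

/-- `f` is singular at the point `p ∈ ℂ^{n+1}`: all partial derivatives vanish at `p`. -/
def SingularAt {n : ℕ} (f : MvPolynomial (Fin (n+1)) ℂ) (p : Fin (n+1) → ℂ) : Prop :=
  ∀ i, MvPolynomial.eval p (MvPolynomial.pderiv i f) = 0

/-- The subspace `W` of `V_{d,n}` of polynomials singular at each of the points
`p 0, …, p (N-1)`. -/
noncomputable def Wsub (n d N : ℕ) (p : Fin N → (Fin (n+1) → ℂ)) :
    Submodule ℂ (Vdn n d) where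
  carrier := {f | ∀ j, SingularAt (f : MvPolynomial (Fin (n+1)) ℂ) (p j)}
  add_mem' := by
    intro a b ha hb j i
    simp only [Submodule.coe_add, map_add, ha j i, hb j i, add_zero]
  zero_mem' := by
    intro j i
    simp
  smul_mem' := by
    intro c f hf j i
    rw [SetLike.val_smul, Derivation.map_smul, MvPolynomial.smul_eval, hf j i, mul_zero]

section Aux

variable {m : ℕ}

private lemma chain_rule' (q y : Fin m → ℂ) (f : MvPolynomial (Fin m) ℂ) :
    Polynomial.derivative
      ((MvPolynomial.aeval fun i => Polynomial.C (q i) + Polynomial.C (y i) * Polynomial.X) f)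
    = ∑ i, Polynomial.C (y i) *
        (MvPolynomial.aeval fun i => Polynomial.C (q i) + Polynomial.C (y i) * Polynomial.X)
          (MvPolynomial.pderiv i f) := by
  induction f using MvPolynomial.induction_on with
  | C a => simp
  | add f g hf hg => simp [hf, hg, mul_add, Finset.sum_add_distrib]
  | mul_X f j hf =>
      rw [map_mul, MvPolynomial.aeval_X, Polynomial.derivative_mul, hf]
      have h1 : ∀ i : Fin m, MvPolynomial.pderiv i (f * MvPolynomial.X j)
          = MvPolynomial.pderiv i f * MvPolynomial.X j
            + if j = i then f else 0 := by
        intro i; rw [pderiv_mul, pderiv_X]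
        by_cases h : j = i <;> simp [h, Pi.single_apply]
      simp only [h1, map_add, map_mul, MvPolynomial.aeval_X]
      have h2 : ∀ i : Fin m,
          (MvPolynomial.aeval fun i => Polynomial.C (q i) + Polynomial.C (y i) * Polynomial.X)
            ((if j = i then f else 0) : MvPolynomial (Fin m) ℂ)
          = if j = i then
              (MvPolynomial.aeval fun i => Polynomial.C (q i) + Polynomial.C (y i) * Polynomial.X) f
            else 0 := by
        intro i; by_cases h : j = i <;> simp [h]
      simp only [h2, mul_add, mul_ite, mul_zero, Finset.sum_add_distrib,
        Finset.sum_ite_eq, Finset.mem_univ, if_true]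
      simp only [Polynomial.derivative_C, Polynomial.derivative_C_mul, Polynomial.derivative_X,
        mul_one, mul_zero, zero_add, add_zero, Finset.sum_mul, mul_assoc]
      ring

private lemma eval_line' (q y : Fin m → ℂ) (f : MvPolynomial (Fin m) ℂ) (t : ℂ) :
    Polynomial.eval t
      ((MvPolynomial.aeval fun i => Polynomial.C (q i) + Polynomial.C (y i) * Polynomial.X) f)
    = MvPolynomial.eval (q + t • y) f := by
  induction f using MvPolynomial.induction_on with
  | C a => simp
  | add f g hf hg => simp [hf, hg]
  | mul_X f j hf =>
      rw [map_mul, MvPolynomial.aeval_X, Polynomial.eval_mul, hf, map_mul,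
        MvPolynomial.eval_X]
      simp only [Polynomial.eval_add, Polynomial.eval_mul, Polynomial.eval_C,
        Polynomial.eval_X, Pi.add_apply, Pi.smul_apply, smul_eq_mul]
      ring

private lemma deriv_vanish' (q y : Fin m → ℂ) (f : MvPolynomial (Fin m) ℂ)
    (h : ∀ t : ℂ, MvPolynomial.eval (q + t • y) f = 0) :
    ∑ i, y i * MvPolynomial.eval q (MvPolynomial.pderiv i f) = 0 := by
  set L : Fin m → Polynomial ℂ := fun i => Polynomial.C (q i) + Polynomial.C (y i) * Polynomial.X
  have hg : (MvPolynomial.aeval L) f = 0 :=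
    Polynomial.funext fun t => by rw [eval_line', h t, Polynomial.eval_zero]
  have hd := chain_rule' q y f
  rw [hg, Polynomial.derivative_zero] at hd
  have h0 := congrArg (Polynomial.eval 0) hd.symm
  simp only [Polynomial.eval_zero, Polynomial.eval_finset_sum, Polynomial.eval_mul,
    Polynomial.eval_C] at h0
  rw [← h0]
  apply Finset.sum_congr rfl
  intro i _
  rw [eval_line' q y _ 0]
  simp

end Aux

private lemma Vdn_eq (n d : ℕ) :
    Vdn n d = MvPolynomial.restrictSupport ℂ {m : Fin (n+1) →₀ ℕ | m.degree = d} := by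
  rw [Vdn, homogeneousSubmodule_eq_finsupp_supported]; rfl

private noncomputable def symEquiv' (n d : ℕ) :
    Sym (Fin (n+1)) d ≃ {m : Fin (n+1) →₀ ℕ | m.degree = d} :=
  (Sym.equivNatSum (Fin (n+1)) d).trans <| Equiv.subtypeEquiv (Equiv.refl _) <| by
    intro m; simp [Finsupp.degree_apply, Finsupp.sum]

noncomputable instance VdnFinite (n d : ℕ) : FiniteDimensional ℂ (Vdn n d) := by
  rw [Vdn_eq]
  haveI : Fintype {m : Fin (n+1) →₀ ℕ | m.degree = d} := Fintype.ofEquiv _ (symEquiv' n d)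
  exact Module.Finite.of_basis (MvPolynomial.basisRestrictSupport ℂ _)

private lemma finrank_Vdn (n d : ℕ) : Module.finrank ℂ (Vdn n d) = Nat.choose (d+n) n := by
  haveI : Fintype {m : Fin (n+1) →₀ ℕ | m.degree = d} := Fintype.ofEquiv _ (symEquiv' n d)
  have h1 : Module.finrank ℂ (Vdn n d)
      = Fintype.card {m : Fin (n+1) →₀ ℕ | m.degree = d} := by
    rw [Vdn_eq]
    exact Module.finrank_eq_card_basis (MvPolynomial.basisRestrictSupport ℂ _)
  rw [h1, ← Fintype.card_congr (symEquiv' n d), Sym.card_sym_eq_choose, Fintype.card_fin]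
  have h2 : n + 1 + d - 1 = d + n := by omega
  rw [h2, ← Nat.choose_symm (by omega : n ≤ d + n)]
  congr 1
  omega

set_option maxHeartbeats 1000000 in
/-- For `N ≥ 2` collinear distinct points of `ℙⁿ` and `d ≤ 2N−2`, the subspace of degree-`d`
forms singular at all the points has codimension at most `N(n−1)+d+1` in `V_{d,n}`, and in
particular at most `N(n+1)−1`. (Codimension bounds are stated additively to avoid truncated
subtraction: `codim W ≤ c` reads `binom(d+n,n) ≤ dim W + c`.) -/
theorem codim_singular_subspace_of_collinear (n N d : ℕ) (hn : 1 ≤ n) (hN : 2 ≤ N)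
    (hd1 : 1 ≤ d) (hd2 : d ≤ 2 * N - 2)
    (p : Fin N → (Fin (n+1) → ℂ)) (hp0 : ∀ j, p j ≠ 0)
    (hpdist : ∀ j j', j ≠ j' → ∀ c : ℂ, p j ≠ c • p j')
    (hcol : ∃ P : Submodule ℂ (Fin (n+1) → ℂ), Module.finrank ℂ P = 2 ∧ ∀ j, p j ∈ P) :
    Nat.choose (d+n) n ≤ Module.finrank ℂ (Wsub n d N p) + (N * (n-1) + d + 1) ∧
      Nat.choose (d+n) n + 1 ≤ Module.finrank ℂ (Wsub n d N p) + N * (n+1) := by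
  classical
  obtain ⟨P, hP2, hPmem⟩ := hcol
  obtain ⟨Q, hQ⟩ := P.exists_isCompl
  have htot : Module.finrank ℂ (Fin (n+1) → ℂ) = n + 1 := by
    simp [Module.finrank_fin_fun]
  have hQr : Module.finrank ℂ Q = n - 1 := by
    have := Submodule.finrank_add_eq_of_isCompl hQ
    rw [hP2, htot] at this
    omega
  -- bases
  let bP : Module.Basis (Fin 2) ℂ P := (Module.finBasis ℂ P).reindex (finCongr hP2)
  let bQ : Module.Basis (Fin (n-1)) ℂ Q := (Module.finBasis ℂ Q).reindex (finCongr hQr)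
  let u : Fin (n+1) → ℂ := (bP 0 : P)
  let v : Fin (n+1) → ℂ := (bP 1 : P)
  let w : Fin (n-1) → Fin (n+1) → ℂ := fun k => (bQ k : Q)
  -- the substitution into the line
  let L : Fin (n+1) → MvPolynomial (Fin 2) ℂ := fun i =>
    MvPolynomial.C (u i) * MvPolynomial.X 0 + MvPolynomial.C (v i) * MvPolynomial.X 1
  -- the linear map whose kernel sits inside W
  let Φ : Vdn n d →ₗ[ℂ] (Fin (d+1) → ℂ) × (Fin N → Fin (n-1) → ℂ) :=
  { toFun := fun f =>
      (fun k => MvPolynomial.coeff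
          (Finsupp.single 0 (k : ℕ) + Finsupp.single 1 (d - (k : ℕ)))
          (MvPolynomial.aeval L (f : MvPolynomial (Fin (n+1)) ℂ)),
       fun j k => ∑ i, w k i *
          MvPolynomial.eval (p j) (MvPolynomial.pderiv i (f : MvPolynomial (Fin (n+1)) ℂ))),
    map_add' := by
      intro f g
      refine Prod.ext ?_ ?_ <;> funext <;>
        simp [mul_add, Finset.sum_add_distrib]
    map_smul' := by
      intro c f
      refine Prod.ext ?_ ?_ <;> funext <;>
        simp [MvPolynomial.smul_eval, Finset.mul_sum, mul_assoc, mul_left_comm] }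
  have hker : LinearMap.ker Φ ≤ Wsub n d N p := by
    intro f hf
    rw [LinearMap.mem_ker] at hf
    have hf1 : ∀ k : Fin (d+1), MvPolynomial.coeff
        (Finsupp.single 0 (k : ℕ) + Finsupp.single 1 (d - (k : ℕ)))
        (MvPolynomial.aeval L (f : MvPolynomial (Fin (n+1)) ℂ)) = 0 :=
      fun k => congrFun (congrArg Prod.fst hf) k
    have hf2 : ∀ j k, ∑ i, w k i *
        MvPolynomial.eval (p j) (MvPolynomial.pderiv i (f : MvPolynomial (Fin (n+1)) ℂ)) = 0 :=
      fun j k => congrFun (congrFun (congrArg Prod.snd hf) j) k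
    -- Step 1: image under L is homogeneous of degree d
    have hFh : (MvPolynomial.aeval L (f : MvPolynomial (Fin (n+1)) ℂ)).IsHomogeneous d := by
      have hfh : (f : MvPolynomial (Fin (n+1)) ℂ).IsHomogeneous d := f.2
      have := hfh.aeval L (fun i =>
        (MvPolynomial.isHomogeneous_C_mul_X (u i) 0).add
          (MvPolynomial.isHomogeneous_C_mul_X (v i) 1))
      simpa using this
    -- Step 2: image is zero
    have hF0 : MvPolynomial.aeval L (f : MvPolynomial (Fin (n+1)) ℂ) = 0 := by
      apply MvPolynomial.ext
      intro mm
      rw [MvPolynomial.coeff_zero]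
      by_contra hmm
      have hdeg : mm.degree = d := by
        by_contra hne
        exact hmm (hFh.coeff_eq_zero hne)
      have hsum : mm 0 + mm 1 = d := by
        have : mm.degree = ∑ i : Fin 2, mm i := by
          rw [Finsupp.degree_apply, Finset.sum_subset (Finset.subset_univ mm.support)]
          intro x _ hx
          simpa using Finsupp.notMem_support_iff.mp hx
        rw [this, Fin.sum_univ_two] at hdeg
        exact hdeg
      have hmm_eq : mm = Finsupp.single 0 (mm 0) + Finsupp.single 1 (mm 1) := by
        ext i
        fin_cases i <;> simp [Finsupp.single_apply]
      have hk : mm 0 < d + 1 := by omega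
      have := hf1 ⟨mm 0, hk⟩
      simp only at this
      rw [hmm_eq] at hmm
      apply hmm
      have h1 : mm 1 = d - mm 0 := by omega
      rw [h1]
      exact this
    -- Step 3: f vanishes on P
    have hvan : ∀ q ∈ P, MvPolynomial.eval q (f : MvPolynomial (Fin (n+1)) ℂ) = 0 := by
      intro q hq
      set c0 : ℂ := bP.repr ⟨q, hq⟩ 0
      set c1 : ℂ := bP.repr ⟨q, hq⟩ 1
      have hrepr : c0 • (bP 0 : Fin (n+1) → ℂ) + c1 • (bP 1 : Fin (n+1) → ℂ) = q := by
        have := bP.sum_repr ⟨q, hq⟩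
        rw [Fin.sum_univ_two] at this
        have h2 := congrArg (fun z : P => (z : Fin (n+1) → ℂ)) this
        simpa only [Submodule.coe_add, Submodule.coe_smul] using h2
      have hcomp := congrArg (fun (g : MvPolynomial (Fin (n+1)) ℂ →ₐ[ℂ] ℂ) =>
          g (f : MvPolynomial (Fin (n+1)) ℂ))
        (MvPolynomial.comp_aeval (f := L)
          (φ := MvPolynomial.aeval (fun t : Fin 2 => ![c0, c1] t)))
      simp only [AlgHom.coe_comp, Function.comp_apply] at hcomp
      rw [hF0, map_zero] at hcomp
      have hLq : (fun i => MvPolynomial.aeval (fun t : Fin 2 => ![c0, c1] t) (L i))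
          = q := by
        funext i
        simp only [L, map_add, map_mul, MvPolynomial.aeval_C, MvPolynomial.aeval_X,
          Algebra.algebraMap_self, RingHom.id_apply, Matrix.cons_val_zero, Matrix.cons_val_one,
          Matrix.head_cons]
        have hri := congrFun hrepr i
        simp only [Pi.add_apply, Pi.smul_apply, smul_eq_mul] at hri
        rw [← hri]
        show (bP 0 : Fin (n+1) → ℂ) i * c0 + (bP 1 : Fin (n+1) → ℂ) i * c1
          = c0 * (bP 0 : Fin (n+1) → ℂ) i + c1 * (bP 1 : Fin (n+1) → ℂ) i
        ring
      rw [hLq] at hcomp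
      rw [← MvPolynomial.coe_aeval_eq_eval]
      exact hcomp.symm
    -- Step 4: all partial derivatives vanish at each p j
    intro j i
    let D : (Fin (n+1) → ℂ) →ₗ[ℂ] ℂ :=
    { toFun := fun y => ∑ i', y i' *
        MvPolynomial.eval (p j) (MvPolynomial.pderiv i' (f : MvPolynomial (Fin (n+1)) ℂ)),
      map_add' := by intro a b; simp [add_mul, Finset.sum_add_distrib],
      map_smul' := by intro c a; simp [Finset.mul_sum, mul_assoc] }
    have hDP : ∀ y ∈ P, D y = 0 := by
      intro y hy
      exact deriv_vanish' (p j) y _ fun t =>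
        hvan _ (P.add_mem (hPmem j) (P.smul_mem t hy))
    have hDQ : ∀ y ∈ Q, D y = 0 := by
      intro y hy
      have hrepr := bQ.sum_repr ⟨y, hy⟩
      have h1 := congrArg (Submodule.subtype Q) hrepr
      simp only [map_sum, map_smul, Submodule.coe_subtype] at h1
      rw [← h1]
      rw [map_sum]
      apply Finset.sum_eq_zero
      intro k _
      rw [map_smul]
      have : D (w k) = 0 := hf2 j k
      simp only [w] at this
      rw [this, smul_zero]
    have hsup : Pi.single i (1:ℂ) ∈ P ⊔ Q := by
      rw [hQ.sup_eq_top]; trivial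
    obtain ⟨a, ha, b, hb, hab⟩ := Submodule.mem_sup.mp hsup
    have hD : D (Pi.single i (1:ℂ)) = 0 := by
      rw [← hab, map_add, hDP a ha, hDQ b hb, add_zero]
    have hDi : D (Pi.single i (1:ℂ))
        = MvPolynomial.eval (p j) (MvPolynomial.pderiv i (f : MvPolynomial (Fin (n+1)) ℂ)) := by
      simp only [D, LinearMap.coe_mk, AddHom.coe_mk]
      rw [Finset.sum_eq_single i]
      · simp
      · intro b _ hbne; simp [Pi.single_apply, hbne]
      · intro h; exact absurd (Finset.mem_univ i) h
    rw [← hDi, hD]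
  -- dimension count
  have hrank := LinearMap.finrank_range_add_finrank_ker Φ
  have hWge : Module.finrank ℂ (LinearMap.ker Φ) ≤ Module.finrank ℂ (Wsub n d N p) :=
    Submodule.finrank_mono hker
  have hrange : Module.finrank ℂ (LinearMap.range Φ) ≤ (d+1) + N*(n-1) := by
    have h1 := Submodule.finrank_le (LinearMap.range Φ)
    have h2 : Module.finrank ℂ ((Fin (d+1) → ℂ) × (Fin N → Fin (n-1) → ℂ))
        = (d+1) + N*(n-1) := by
      have ha : Module.finrank ℂ (Fin (d+1) → ℂ) = d+1 := by
        rw [Module.finrank_pi]; simp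
      have hb : Module.finrank ℂ (Fin N → Fin (n-1) → ℂ) = N * (n-1) := by
        rw [Module.finrank_pi_fintype]
        simp [Module.finrank_pi]
      rw [Module.finrank_prod, ha, hb]
    omega
  have hV := finrank_Vdn n d
  have key : Nat.choose (d+n) n
      ≤ Module.finrank ℂ (Wsub n d N p) + (N * (n-1) + d + 1) := by omega
  refine ⟨key, ?_⟩
  have hmul : N * (n+1) = N * (n-1) + 2 * N := by
    have : n + 1 = (n - 1) + 2 := by omega
    rw [this, Nat.mul_add]
    ring
  omega
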